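/- For the dihedral group D_{2p} with p an odd prime, pd(D_{2p}) = 1. -/

import Mathlib

open scoped Pointwise

def permutizer {G : Type*} [Group G] (X : Subgroup G) : Subgroup G :=
  Subgroup.closure {g : G |
    (Subgroup.zpowers g : Set G) * (X : Set G) = (X : Set G) * (Subgroup.zpowers g : Set G)}

noncomputable def pd (G : Type*) [Group G] : ℚ :=
  (∑ᶠ X : Subgroup G, (Nat.card ↥(permutizer X) : ℚ)) /
    ((Nat.card G : ℚ) * (Nat.card (Subgroup G) : ℚ))

noncomputable def PP (G : Type*) [Group G] : Subgroup G :=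
  ⨅ H : Subgroup G, permutizer H

section Aux

variable {G : Type*} [Group G]

lemma sub_mul_eq {H X : Subgroup G} (h : H ≤ X) : (H : Set G) * (X : Set G) = X := by
  ext a
  constructor
  · rintro ⟨b, hb, c, hc, rfl⟩; exact X.mul_mem (h hb) hc
  · intro ha; exact ⟨1, H.one_mem, a, ha, one_mul a⟩

lemma mul_sub_eq {H X : Subgroup G} (h : H ≤ X) : (X : Set G) * (H : Set G) = X := by
  ext a
  constructor
  · rintro ⟨b, hb, c, hc, rfl⟩; exact X.mul_mem hb (h hc)
  · intro ha; exact ⟨a, ha, 1, H.one_mem, mul_one a⟩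

lemma mem_permutizer_set_of_mem {X : Subgroup G} {g : G} (h : g ∈ X) :
    g ∈ {g : G | (Subgroup.zpowers g : Set G) * (X : Set G)
        = (X : Set G) * (Subgroup.zpowers g : Set G)} := by
  have hle : Subgroup.zpowers g ≤ X := Subgroup.zpowers_le.mpr h
  show (Subgroup.zpowers g : Set G) * (X : Set G) = (X : Set G) * (Subgroup.zpowers g : Set G)
  rw [sub_mul_eq hle, mul_sub_eq hle]

lemma mem_permutizer_set_of_normal {X : Subgroup G} {g : G}
    (h : (Subgroup.zpowers g).Normal) :
    g ∈ {g : G | (Subgroup.zpowers g : Set G) * (X : Set G)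
        = (X : Set G) * (Subgroup.zpowers g : Set G)} := by
  haveI := h
  exact (Subgroup.set_mul_normal_comm (X : Set G) (Subgroup.zpowers g)).symm

end Aux

namespace DihedralGroup

variable {p : ℕ}

lemma inv_r' (i : ZMod p) : (r i : DihedralGroup p)⁻¹ = r (-i) :=
  inv_eq_of_mul_eq_one_right (by rw [r_mul_r, add_neg_cancel, one_def])

lemma inv_sr' (i : ZMod p) : (sr i : DihedralGroup p)⁻¹ = sr i :=
  inv_eq_of_mul_eq_one_right (sr_mul_self i)

lemma conj_r_r (i k : ZMod p) : r i * r k * (r i : DihedralGroup p)⁻¹ = r k := by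
  rw [inv_r', r_mul_r, r_mul_r]; ring_nf

lemma conj_sr_r (i k : ZMod p) : sr i * r k * (sr i : DihedralGroup p)⁻¹ = r (-k) := by
  rw [inv_sr', sr_mul_r, sr_mul_sr]; ring_nf

lemma r_one_zpow' (m : ℤ) : (r 1 : DihedralGroup p) ^ m = r (m : ZMod p) := by
  induction m using Int.induction_on with
  | zero => simp [one_def, -r_zero]
  | succ k ih => rw [zpow_add, zpow_one, ih, r_mul_r]; push_cast; ring_nf
  | pred k ih =>
      rw [sub_eq_add_neg, zpow_add, ih, zpow_neg, zpow_one, inv_r', r_mul_r]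
      push_cast; ring_nf

lemma rot_normal (p : ℕ) :
    (Subgroup.zpowers (DihedralGroup.r 1 : DihedralGroup p)).Normal := by
  constructor
  intro x hx g
  rw [Subgroup.mem_zpowers_iff] at hx ⊢
  obtain ⟨n, rfl⟩ := hx
  rcases g with i | i
  · exact ⟨n, by rw [r_one_zpow', conj_r_r]⟩
  · exact ⟨-n, by rw [r_one_zpow', r_one_zpow', conj_sr_r]; push_cast; ring_nf⟩

end DihedralGroup

open DihedralGroup in
lemma permutizer_eq_top (p : ℕ) [NeZero p] (X : Subgroup (DihedralGroup p)) :
    permutizer X = ⊤ := by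
  rw [eq_top_iff]
  by_cases hX : X ≤ Subgroup.zpowers (r 1)
  · have hnorm : X.Normal := by
      constructor
      intro x hx g
      obtain ⟨m, rfl⟩ := Subgroup.mem_zpowers_iff.mp (hX hx)
      rw [r_one_zpow'] at hx ⊢
      rcases g with i | i
      · rw [conj_r_r]; exact hx
      · rw [conj_sr_r, ← inv_r']; exact X.inv_mem hx
    intro g _
    haveI := hnorm
    apply Subgroup.subset_closure
    exact Subgroup.set_mul_normal_comm (Subgroup.zpowers g : Set _) X
  · obtain ⟨x, hxX, hxr⟩ := SetLike.not_le_iff_exists.mp hX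
    obtain ⟨i, rfl⟩ : ∃ i, x = sr i := by
      rcases x with j | j
      · exact absurd ⟨(j.val : ℤ), by
          show (r 1 : DihedralGroup p) ^ ((j.val : ℕ) : ℤ) = r j
          rw [zpow_natCast, r_one_pow, ZMod.natCast_zmod_val]⟩ hxr
      · exact ⟨j, rfl⟩
    have hr1 : (r 1 : DihedralGroup p) ∈ permutizer X :=
      Subgroup.subset_closure (mem_permutizer_set_of_normal (rot_normal p))
    have hsr : (sr i : DihedralGroup p) ∈ permutizer X :=
      Subgroup.subset_closure (mem_permutizer_set_of_mem hxX)
    have hrk : ∀ k : ZMod p, (r k : DihedralGroup p) ∈ permutizer X := by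
      intro k
      have : (r k : DihedralGroup p) = (r 1) ^ (k.val) := by
        rw [r_one_pow, ZMod.natCast_zmod_val]
      rw [this]
      exact pow_mem hr1 _
    intro g _
    rcases g with j | j
    · exact hrk j
    · have : (sr j : DihedralGroup p) = sr i * r (j - i) := by
        rw [sr_mul_r]; ring_nf
      rw [this]
      exact mul_mem hsr (hrk _)

theorem pd_dihedral_odd_prime (p : ℕ) (hp : p.Prime) (hodd : Odd p) :
    pd (DihedralGroup p) = 1 := by
  haveI : NeZero p := ⟨hp.pos.ne'⟩
  haveI : Fintype (Subgroup (DihedralGroup p)) := Fintype.ofFinite _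
  unfold pd
  have hsum : (∑ᶠ X : Subgroup (DihedralGroup p), (Nat.card ↥(permutizer X) : ℚ))
      = (Nat.card (Subgroup (DihedralGroup p)) : ℚ) * (Nat.card (DihedralGroup p) : ℚ) := by
    rw [finsum_eq_sum_of_fintype]
    have h : ∀ X : Subgroup (DihedralGroup p),
        (Nat.card ↥(permutizer X) : ℚ) = (Nat.card (DihedralGroup p) : ℚ) := by
      intro X
      rw [permutizer_eq_top p X]
      congr 1
      exact Nat.card_congr Subgroup.topEquiv.toEquiv
    simp only [h, Finset.sum_const, Finset.card_univ, nsmul_eq_mul,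
      Nat.card_eq_fintype_card]
  rw [hsum]
  have h1 : (Nat.card (DihedralGroup p) : ℚ) ≠ 0 := by
    rw [DihedralGroup.nat_card]
    exact_mod_cast Nat.mul_ne_zero two_ne_zero hp.pos.ne'
  have h2 : (Nat.card (Subgroup (DihedralGroup p)) : ℚ) ≠ 0 := by
    rw [Nat.card_eq_fintype_card]
    exact_mod_cast Fintype.card_ne_zero
  field_simp
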